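/- Let M, M' be MDPs as above with γ < 1 and |r(s,a)| ≤ R. Define finite-horizon value functions by Q_1(s,a) = r(s,a), V_n(s) = max_a Q_n(s,a), and Q_n(s,a) = r(s,a) + γ Σ_{s'} T(s,a,s') V_{n-1}(s'), with analogous definitions Q'_n, V'_n for M'. If Σ_{s'} |T'(s,a,s') - T(s,a,s')| ≤ η for all s,a, and κ_{n-1} := max_s |V'_{n-1}(s) - V_{n-1}(s)|, then for all s,a: |Q'_n(s,a) - Q_n(s,a)| ≤ γ(η·R/(1-γ) + κ_{n-1}). -/
import Mathlib


/-- One-step finite-horizon perturbation bound: if the previous-horizon value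
functions differ by at most `κ`, the next-horizon Q functions differ by at most
`γ (η R / (1 - γ) + κ)`. -/
theorem finite_horizon_q_bound
    {S A : Type*} [Fintype S]
    (T T' : S → A → S → ℝ) (r : S → A → ℝ) (γ R η κ : ℝ)
    (hγ0 : 0 ≤ γ) (hγ1 : γ < 1)
    (hT0 : ∀ s a s', 0 ≤ T s a s') (hT1 : ∀ s a, ∑ s', T s a s' = 1)
    (hT'0 : ∀ s a s', 0 ≤ T' s a s') (hT'1 : ∀ s a, ∑ s', T' s a s' = 1)
    (hη : ∀ s a, ∑ s', |T' s a s' - T s a s'| ≤ η)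
    (V V' : S → ℝ)
    (hVbound : ∀ s, |V s| ≤ R / (1 - γ))
    (hκ : ∀ s, |V' s - V s| ≤ κ)
    (Qn Qn' : S → A → ℝ)
    (hQn : ∀ s a, Qn s a = r s a + γ * ∑ s', T s a s' * V s')
    (hQn' : ∀ s a, Qn' s a = r s a + γ * ∑ s', T' s a s' * V' s') :
    ∀ s a, |Qn' s a - Qn s a| ≤ γ * (η * R / (1 - γ) + κ) := by
  intro s a
  have key : Qn' s a - Qn s a
      = γ * ((∑ s', (T' s a s' - T s a s') * V s')
        + ∑ s', T' s a s' * (V' s' - V s')) := by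
    rw [hQn, hQn']
    rw [← Finset.sum_add_distrib]
    have h : ∀ x, (T' s a x - T s a x) * V x + T' s a x * (V' x - V x)
        = T' s a x * V' x - T s a x * V x := fun x => by ring
    simp_rw [h, Finset.sum_sub_distrib]
    ring
  rw [key, abs_mul, abs_of_nonneg hγ0]
  apply mul_le_mul_of_nonneg_left _ hγ0
  calc |(∑ s', (T' s a s' - T s a s') * V s') + ∑ s', T' s a s' * (V' s' - V s')|
      ≤ |∑ s', (T' s a s' - T s a s') * V s'| + |∑ s', T' s a s' * (V' s' - V s')| :=
        abs_add_le _ _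
    _ ≤ (∑ s', |(T' s a s' - T s a s') * V s'|) + ∑ s', |T' s a s' * (V' s' - V s')| := by
        gcongr <;> exact Finset.abs_sum_le_sum_abs _ _
    _ ≤ (∑ s', |T' s a s' - T s a s'| * (R / (1 - γ))) + ∑ s', T' s a s' * κ := by
        gcongr with x _ x _
        · rw [abs_mul]
          exact mul_le_mul_of_nonneg_left (hVbound x) (abs_nonneg _)
        · rw [abs_mul, abs_of_nonneg (hT'0 s a x)]
          exact mul_le_mul_of_nonneg_left (hκ x) (hT'0 s a x)
    _ ≤ η * R / (1 - γ) + κ := by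
        rw [← Finset.sum_mul, ← Finset.sum_mul, hT'1, one_mul]
        have hR : 0 ≤ R / (1 - γ) := le_trans (abs_nonneg _) (hVbound s)
        have : η * R / (1 - γ) = η * (R / (1 - γ)) := by ring
        rw [this]
        gcongr
        exact hη s a
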